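/- arXiv:math/0210132 — 2 statements merged into one kernel-verified Lean document; each statement's English description precedes it below -/
import Mathlib

section
/- Let K be a complete discretely valued field of characteristic 0 with residue field k of characteristic p > 0, and let h(X) ∈ K[X] be a monic polynomial of degree p with h(0) = 0. If every root of the derivative h'(X) (in an algebraic closure) is mapped by h into the valuation ring R (i.e., the finite branch locus of the cover induced by h is contained in R), then h(X) has coefficients in R and its reduction modulo the maximal ideal equals X^p. -/
open Polynomial

section Aux

variable {L : Type*} [Field L] {v : L → WithTop ℚ}

theorem aux_nsmul_coe (n : ℕ) (q : ℚ) :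
    (n • ((q : WithTop ℚ))) = ((n • q : ℚ) : WithTop ℚ) := by
  induction n with
  | zero => simp
  | succ k ih => rw [succ_nsmul, succ_nsmul, ih]; push_cast; ring

theorem aux_nsmul_ne_top {n : ℕ} {c : WithTop ℚ} (hc : c ≠ ⊤) : n • c ≠ ⊤ := by
  obtain ⟨q, rfl⟩ := WithTop.ne_top_iff_exists.mp hc
  rw [aux_nsmul_coe]
  exact WithTop.coe_ne_top

theorem aux_lt_one_add {x : WithTop ℚ} (hx : x ≠ ⊤) : x < 1 + x := by
  obtain ⟨q, rfl⟩ := WithTop.ne_top_iff_exists.mp hx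
  rw [show ((1 : WithTop ℚ) + (q : WithTop ℚ)) = ((1 + q : ℚ) : WithTop ℚ) by push_cast; ring]
  exact_mod_cast lt_one_add q

theorem aux_add_lt_add {a b c d : WithTop ℚ} (h1 : a < b) (h2 : c ≤ d) (hc : c ≠ ⊤) :
    a + c < b + d :=
  lt_of_lt_of_le (by rwa [WithTop.add_lt_add_iff_right hc]) (add_le_add_right h2 b)

theorem aux_exists_min {α : Type*} (f : α → WithTop ℚ) (s : Multiset α) (hs : s ≠ 0) :
    ∃ a ∈ s, ∀ b ∈ s, f a ≤ f b := by
  induction s using Multiset.induction_on with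
  | empty => exact absurd rfl hs
  | cons a t ih =>
    rcases eq_or_ne t 0 with rfl | ht
    · exact ⟨a, Multiset.mem_cons_self a 0, by simp⟩
    · obtain ⟨b, hb, hmin⟩ := ih ht
      rcases le_total (f a) (f b) with hab | hab
      · refine ⟨a, Multiset.mem_cons_self a t, ?_⟩
        intro c hc
        rcases Multiset.mem_cons.mp hc with rfl | hc
        · exact le_refl _
        · exact le_trans hab (hmin c hc)
      · refine ⟨b, Multiset.mem_cons_of_mem hb, ?_⟩
        intro c hc
        rcases Multiset.mem_cons.mp hc with rfl | hc
        · exact hab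
        · exact hmin c hc

section Val

variable (hv0 : ∀ x : L, v x = ⊤ ↔ x = 0)
  (hvmul : ∀ x y : L, v (x * y) = v x + v y)
  (hvadd : ∀ x y : L, min (v x) (v y) ≤ v (x + y))

include hv0 hvmul in
theorem aux_v_one : v (1 : L) = 0 := by
  have h := hvmul 1 1
  rw [mul_one] at h
  cases hv : v (1 : L) with
  | top => exact absurd ((hv0 1).mp hv) one_ne_zero
  | coe q =>
    rw [hv, ← WithTop.coe_add, WithTop.coe_inj] at h
    rw [show q = 0 by linarith]
    rfl

include hv0 hvmul in
theorem aux_v_neg (x : L) : v (-x) = v x := by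
  have hm1 : v (-1 : L) = 0 := by
    have h := hvmul (-1) (-1)
    rw [neg_mul_neg, one_mul, aux_v_one hv0 hvmul] at h
    cases hv : v (-1 : L) with
    | top => rw [hv] at h; simp at h
    | coe q =>
      rw [hv, ← WithTop.coe_add] at h
      have hq : q + q = 0 := by exact_mod_cast h.symm
      exact_mod_cast show q = (0:ℚ) by linarith
  rw [show -x = -1 * x by ring, hvmul, hm1, zero_add]

include hv0 hvmul in
theorem aux_v_neg_one_pow (n : ℕ) : v ((-1 : L) ^ n) = 0 := by
  rcases Nat.even_or_odd n with he | ho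
  · rw [he.neg_one_pow]; exact aux_v_one hv0 hvmul
  · rw [ho.neg_one_pow, ← neg_neg (1 : L) ]
    rw [aux_v_neg hv0 hvmul, neg_neg]  -- v(-(-(1)))... 
    exact aux_v_one hv0 hvmul

include hv0 hvmul hvadd in
theorem aux_v_add_eq_left {x y : L} (h : v x < v y) : v (x + y) = v x := by
  have h1 : v x ≤ v (x + y) := by
    have := hvadd x y
    rwa [min_eq_left h.le] at this
  refine le_antisymm ?_ h1
  by_contra hcon
  push_neg at hcon
  have h2 : min (v (x + y)) (v (-y)) ≤ v x := by
    have := hvadd (x + y) (-y)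
    rwa [add_neg_cancel_right] at this
  rw [aux_v_neg hv0 hvmul] at h2
  exact absurd h2 (not_le.mpr (lt_min hcon h))

include hv0 hvmul hvadd in
theorem aux_v_sub_eq_left {x y : L} (h : v x < v y) : v (x - y) = v x := by
  rw [sub_eq_add_neg]
  exact aux_v_add_eq_left hv0 hvmul hvadd (by rwa [aux_v_neg hv0 hvmul])

include hv0 hvadd in
theorem aux_v_sum_le {c : WithTop ℚ} (s : Multiset L) (hs : ∀ x ∈ s, c ≤ v x) :
    c ≤ v s.sum := by
  induction s using Multiset.induction_on with
  | empty => rw [Multiset.sum_zero, (hv0 0).mpr rfl]; exact le_top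
  | cons a t ih =>
    rw [Multiset.sum_cons]
    refine le_trans (le_min (hs a (Multiset.mem_cons_self a t)) (ih fun x hx => hs x (Multiset.mem_cons_of_mem hx))) (hvadd _ _)

include hv0 hvadd in
theorem aux_v_sum_lt {c : WithTop ℚ} (hc : c ≠ ⊤) (s : Multiset L) (hs : ∀ x ∈ s, c < v x) :
    c < v s.sum := by
  induction s using Multiset.induction_on with
  | empty => rw [Multiset.sum_zero, (hv0 0).mpr rfl]; exact hc.lt_top
  | cons a t ih =>
    rw [Multiset.sum_cons]
    exact lt_of_lt_of_le (lt_min (hs a (Multiset.mem_cons_self a t)) (ih fun x hx => hs x (Multiset.mem_cons_of_mem hx))) (hvadd _ _)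

include hv0 hvmul in
theorem aux_v_prod (s : Multiset L) : v s.prod = (s.map v).sum := by
  induction s using Multiset.induction_on with
  | empty => rw [Multiset.prod_zero, Multiset.map_zero, Multiset.sum_zero]; exact aux_v_one hv0 hvmul
  | cons a t ih => rw [Multiset.prod_cons, Multiset.map_cons, Multiset.sum_cons, hvmul, ih]

theorem aux_smul_le_sum {c : WithTop ℚ} (s : Multiset L) (hs : ∀ x ∈ s, c ≤ v x) :
    Multiset.card s • c ≤ (s.map v).sum := by
  induction s using Multiset.induction_on with
  | empty => simp
  | cons a t ih =>
    rw [Multiset.card_cons, Multiset.map_cons, Multiset.sum_cons, succ_nsmul, add_comm (Multiset.card t • c) c]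
    exact add_le_add (hs a (Multiset.mem_cons_self a t)) (ih fun x hx => hs x (Multiset.mem_cons_of_mem hx))

theorem aux_smul_lt_sum {c : WithTop ℚ} (hc : c ≠ ⊤) (s : Multiset L) (hne : s ≠ 0)
    (hs : ∀ x ∈ s, c < v x) : Multiset.card s • c < (s.map v).sum := by
  obtain ⟨a, ha⟩ := Multiset.exists_mem_of_ne_zero hne
  obtain ⟨t, rfl⟩ := Multiset.exists_cons_of_mem ha
  rw [Multiset.card_cons, Multiset.map_cons, Multiset.sum_cons, succ_nsmul, add_comm (Multiset.card t • c) c]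
  exact aux_add_lt_add (hs a (Multiset.mem_cons_self a t))
    (aux_smul_le_sum t fun x hx => (hs x (Multiset.mem_cons_of_mem hx)).le) (aux_nsmul_ne_top hc)

include hv0 hvadd in
theorem aux_v_nat_nonneg (hv1 : v (1 : L) = 0) (n : ℕ) : (0 : WithTop ℚ) ≤ v (n : L) := by
  induction n with
  | zero => rw [Nat.cast_zero, (hv0 0).mpr rfl]; exact le_top
  | succ k ih =>
    rw [Nat.cast_succ]
    exact le_trans (le_min ih (le_of_eq hv1.symm)) (hvadd _ _)

include hv0 hvmul hvadd in
theorem aux_v_int_nonneg (n : ℤ) : (0 : WithTop ℚ) ≤ v (n : L) := by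
  have h1 := aux_v_one hv0 hvmul
  induction n using Int.rec with
  | ofNat k =>
    rw [Int.ofNat_eq_coe, Int.cast_natCast]
    exact aux_v_nat_nonneg hv0 hvadd h1 k
  | negSucc k =>
    rw [Int.cast_negSucc, aux_v_neg hv0 hvmul]
    exact_mod_cast aux_v_nat_nonneg hv0 hvadd h1 (k + 1)


theorem aux_nsmul_mono {a b : WithTop ℚ} (hab : a ≤ b) (n : ℕ) : n • a ≤ n • b := by
  induction n with
  | zero => simp
  | succ k ih => rw [succ_nsmul, succ_nsmul]; exact add_le_add ih hab

include hv0 hvadd in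
theorem aux_v_finset_sum_lt {ι : Type*} {c : WithTop ℚ} (hc : c ≠ ⊤) (s : Finset ι) (g : ι → L)
    (hs : ∀ i ∈ s, c < v (g i)) : c < v (∑ i ∈ s, g i) := by
  classical
  induction s using Finset.induction_on with
  | empty => simpa [(hv0 0).mpr rfl] using hc.lt_top
  | insert _ _ hnot ih =>
    rw [Finset.sum_insert hnot]
    exact lt_of_lt_of_le (lt_min (hs _ (Finset.mem_insert_self _ _))
      (ih fun i hi => hs i (Finset.mem_insert_of_mem hi))) (hvadd _ _)

include hv0 hvmul hvadd in
theorem aux_v_nat_coprime {p : ℕ} (hp : p.Prime) (hvp : v (p : L) = 1)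
    {n : ℕ} (h1 : 0 < n) (h2 : n < p) : v (n : L) = 0 := by
  have hv1 : v (1 : L) = 0 := aux_v_one hv0 hvmul
  have hcop : Nat.Coprime p n :=
    (Nat.Prime.coprime_iff_not_dvd hp).mpr fun hd => absurd (Nat.le_of_dvd h1 hd) (not_le.mpr h2)
  have hbez : (1 : ℤ) = (p : ℤ) * Nat.gcdA p n + (n : ℤ) * Nat.gcdB p n := by
    have h3 := Nat.gcd_eq_gcd_ab p n
    rwa [Nat.Coprime.gcd_eq_one hcop, Nat.cast_one] at h3
  have hbezL : (1 : L) = (p : L) * ((Nat.gcdA p n : ℤ) : L) + (n : L) * ((Nat.gcdB p n : ℤ) : L) := by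
    exact_mod_cast congrArg (fun z : ℤ => (z : L)) hbez
  have hmin : min (v ((p : L) * ((Nat.gcdA p n : ℤ) : L))) (v ((n : L) * ((Nat.gcdB p n : ℤ) : L))) ≤ 0 := by
    rw [← hv1, hbezL]
    exact hvadd _ _
  have hleft : (0 : WithTop ℚ) < v ((p : L) * ((Nat.gcdA p n : ℤ) : L)) := by
    rw [hvmul, hvp]
    calc (0 : WithTop ℚ) < 1 := by norm_num
    _ ≤ 1 + v ((Nat.gcdA p n : ℤ) : L) := le_add_of_nonneg_right (aux_v_int_nonneg hv0 hvmul hvadd _)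
  have hright : v ((n : L) * ((Nat.gcdB p n : ℤ) : L)) ≤ 0 := by
    rcases min_le_iff.mp hmin with h' | h'
    · exact absurd h' (not_le.mpr hleft)
    · exact h'
  rw [hvmul] at hright
  refine le_antisymm ?_ (aux_v_nat_nonneg hv0 hvadd hv1 n)
  calc v ((n : L)) ≤ v ((n : L)) + v ((Nat.gcdB p n : ℤ) : L) :=
        le_add_of_nonneg_right (aux_v_int_nonneg hv0 hvmul hvadd _)
  _ ≤ 0 := hright

include hv0 hvmul hvadd in
theorem aux_v_esymm_le {c : WithTop ℚ} (s : Multiset L) (hs : ∀ x ∈ s, c ≤ v x) (n : ℕ) :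
    (n • c : WithTop ℚ) ≤ v (s.esymm n) := by
  rw [Multiset.esymm]
  apply aux_v_sum_le hv0 hvadd
  intro x hx
  obtain ⟨t, ht, rfl⟩ := Multiset.mem_map.mp hx
  obtain ⟨hts, htc⟩ := Multiset.mem_powersetCard.mp ht
  rw [aux_v_prod hv0 hvmul, ← htc]
  exact aux_smul_le_sum t fun x hx => hs x (Multiset.mem_of_le hts hx)

include hv0 hvmul hvadd in
theorem aux_v_esymm_lt {c : WithTop ℚ} (hc : c ≠ ⊤) (s : Multiset L) (hs : ∀ x ∈ s, c < v x)
    {n : ℕ} (hn : 0 < n) : (n • c : WithTop ℚ) < v (s.esymm n) := by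
  rw [Multiset.esymm]
  apply aux_v_sum_lt hv0 hvadd (aux_nsmul_ne_top hc)
  intro x hx
  obtain ⟨t, ht, rfl⟩ := Multiset.mem_map.mp hx
  obtain ⟨hts, htc⟩ := Multiset.mem_powersetCard.mp ht
  rw [aux_v_prod hv0 hvmul, ← htc]
  refine aux_smul_lt_sum hc t ?_ fun x hx => hs x (Multiset.mem_of_le hts hx)
  intro h0
  rw [h0] at htc
  simp at htc
  omega

include hv0 hvmul hvadd in
theorem aux_v_coeff_le {c : WithTop ℚ} (s : Multiset L) (hs : ∀ x ∈ s, c ≤ v x)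
    {k : ℕ} (hk : k ≤ Multiset.card s) :
    ((Multiset.card s - k) • c : WithTop ℚ) ≤ v (((s.map fun z => X - C z).prod).coeff k) := by
  rw [Multiset.prod_X_sub_C_coeff s hk, hvmul, aux_v_neg_one_pow hv0 hvmul, zero_add]
  exact aux_v_esymm_le hv0 hvmul hvadd s hs _

include hv0 hvmul hvadd in
theorem aux_v_coeff_lt {c : WithTop ℚ} (hc : c ≠ ⊤) (s : Multiset L) (hs : ∀ x ∈ s, c < v x)
    {k : ℕ} (hk : k < Multiset.card s) :
    ((Multiset.card s - k) • c : WithTop ℚ) < v (((s.map fun z => X - C z).prod).coeff k) := by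
  rw [Multiset.prod_X_sub_C_coeff s hk.le, hvmul, aux_v_neg_one_pow hv0 hvmul, zero_add]
  exact aux_v_esymm_lt hv0 hvmul hvadd hc s hs (by omega)

end Val

end Aux

/-- **Lemma 3.1.** Let `K` be a complete discretely valued field of characteristic `0`
with residue characteristic `p > 0` (encoded by a rank-one valuation `v`, normalized by
`v p = 1`, on an algebraically closed extension `L` of `K`, discrete on `K`), and let
`h ∈ K[X]` be monic of degree `p` with `h 0 = 0`.  If every root of `h'` (in `L`) is
mapped by `h` into the valuation ring, then `h` has coefficients in the valuation ring
and its reduction modulo the maximal ideal is `X ^ p`. -/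
theorem specialization_stmt0
    (p : ℕ) (hp : p.Prime)
    (K L : Type*) [Field K] [CharZero K] [Field L] [IsAlgClosed L] [Algebra K L]
    (v : L → WithTop ℚ)
    (hv0 : ∀ x : L, v x = ⊤ ↔ x = 0)
    (hvmul : ∀ x y : L, v (x * y) = v x + v y)
    (hvadd : ∀ x y : L, min (v x) (v y) ≤ v (x + y))
    (hvp : v (p : L) = 1)
    (e : ℕ) (he : 0 < e)
    (hdisc : ∀ x : K, x ≠ 0 → ∃ n : ℤ, v (algebraMap K L x) = ((n : ℚ) / (e : ℚ) : ℚ))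
    (h : K[X]) (hmonic : h.Monic) (hdeg : h.natDegree = p) (h0 : h.coeff 0 = 0)
    (hbranch : ∀ y : L, (derivative (h.map (algebraMap K L))).eval y = 0 →
      0 ≤ v ((h.map (algebraMap K L)).eval y)) :
    (∀ i, 0 ≤ v (algebraMap K L (h.coeff i))) ∧
      (∀ i < p, 0 < v (algebraMap K L (h.coeff i))) := by
  classical
  haveI : CharZero L := charZero_of_injective_algebraMap (algebraMap K L).injective
  have hp2 : 2 ≤ p := hp.two_le
  have hv1 : v (1 : L) = 0 := aux_v_one hv0 hvmul
  set f := algebraMap K L with hf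
  set H : L[X] := h.map f with hH
  have hHm : H.Monic := hmonic.map f
  have hHdeg : H.natDegree = p := by rw [hH, hmonic.natDegree_map, hdeg]
  have hHne : H ≠ 0 := hHm.ne_zero
  have hZcard : Multiset.card H.roots = p := by
    rw [splits_iff_card_roots.mp (IsAlgClosed.splits H), hHdeg]
  set Z := H.roots with hZ
  have hZprod : H = (Z.map fun z => X - C z).prod :=
    (IsAlgClosed.splits H).eq_prod_roots_of_monic hHm
  -- Step A: all roots of H have positive valuation
  have hroots_pos : ∀ z ∈ Z, (0 : WithTop ℚ) < v z := by
    by_contra hcon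
    push_neg at hcon
    obtain ⟨z₀, hz₀Z, hz₀⟩ := hcon
    have hZne : Z ≠ 0 := by
      intro h'
      rw [h'] at hZcard
      simp at hZcard
      omega
    obtain ⟨zm, hzmZ, hzmin⟩ := aux_exists_min v Z hZne
    set lam := v zm with hlam
    have hlam0 : lam ≤ 0 := le_trans (hzmin z₀ hz₀Z) hz₀
    have hlamtop : lam ≠ ⊤ := by
      intro ht
      rw [ht] at hlam0
      exact absurd hlam0 (by simp)
    have h0root : (0 : L) ∈ Z := by
      rw [hZ, mem_roots hHne]
      rw [IsRoot.def, ← coeff_zero_eq_eval_zero, hH, coeff_map, h0, map_zero]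
    set S0 := Z.filter (fun z => v z = lam) with hS0
    set T := Z.filter (fun z => ¬ v z = lam) with hT
    have hZsplit : S0 + T = Z := Multiset.filter_add_not _ Z
    set m := Multiset.card S0 with hm
    have hS0le : S0 ≤ Z := Multiset.filter_le _ Z
    have hzmS : zm ∈ S0 := Multiset.mem_filter.mpr ⟨hzmZ, rfl⟩
    have hm1 : 1 ≤ m :=
      Multiset.card_pos.mpr (fun h' => by rw [h'] at hzmS; simp at hzmS)
    have h0T : (0 : L) ∈ T := by
      refine Multiset.mem_filter.mpr ⟨h0root, ?_⟩
      rw [(hv0 0).mpr rfl]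
      exact fun hh => hlamtop hh.symm
    have hZcards : m + Multiset.card T = p := by
      have h' := congrArg Multiset.card hZsplit
      rw [Multiset.card_add] at h'
      rw [hm, h', hZcard]
    have hT1 : 1 ≤ Multiset.card T :=
      Multiset.card_pos.mpr (fun h' => by rw [h'] at h0T; simp at h0T)
    have hmp : m ≤ p - 1 := by omega
    have hS0v : ∀ x ∈ S0, v x = lam := fun x hx => (Multiset.mem_filter.mp hx).2
    have hTv : ∀ x ∈ T, lam < v x := by
      intro x hx
      obtain ⟨hxZ, hxne⟩ := Multiset.mem_filter.mp hx
      exact lt_of_le_of_ne (hzmin x hxZ) (fun hh => hxne hh.symm)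
    set A := (S0.map fun z => X - C z).prod with hA
    set B := (T.map fun z => X - C z).prod with hB
    have hAB : H = A * B := by
      rw [hZprod, ← hZsplit, Multiset.map_add, Multiset.prod_add]
    have hAdeg : A.natDegree = m := by
      rw [hA, natDegree_multiset_prod_X_sub_C_eq_card]
    have hBdeg : B.natDegree = Multiset.card T := by
      rw [hB, natDegree_multiset_prod_X_sub_C_eq_card]
    have hBm : B.Monic := monic_multiset_prod_of_monic _ _ fun z _ => monic_X_sub_C z
    have hAc0 : v (A.coeff 0) = m • lam := by
      rw [coeff_zero_eq_eval_zero, hA, eval_multiset_prod, Multiset.map_map,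
        aux_v_prod hv0 hvmul, Multiset.map_map]
      have hrep : S0.map (v ∘ (eval 0 : L[X] → L) ∘ fun z => X - C z) = Multiset.replicate m lam := by
        rw [Multiset.eq_replicate]
        refine ⟨by rw [Multiset.card_map], ?_⟩
        intro b hb
        obtain ⟨z, hz, rfl⟩ := Multiset.mem_map.mp hb
        simp only [Function.comp_apply, eval_sub, eval_X, eval_C, zero_sub]
        rw [aux_v_neg hv0 hvmul]
        exact hS0v z hz
      rw [hrep, Multiset.sum_replicate]
    have hHcoeff : v (H.coeff (p - m)) = m • lam := by
      rw [hAB, coeff_mul]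
      have hmem : ((0 : ℕ), p - m) ∈ Finset.HasAntidiagonal.antidiagonal (p - m) := by simp
      rw [← Finset.add_sum_erase _ _ hmem]
      have hterm : v (A.coeff 0 * B.coeff (p - m)) = m • lam := by
        rw [show p - m = B.natDegree by omega, hBm.coeff_natDegree, mul_one, hAc0]
      have hrest : (m • lam : WithTop ℚ) <
          v (∑ x ∈ (Finset.HasAntidiagonal.antidiagonal (p - m)).erase (0, p - m), A.coeff x.1 * B.coeff x.2) := by
        apply aux_v_finset_sum_lt hv0 hvadd (aux_nsmul_ne_top hlamtop)
        intro ij hij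
        obtain ⟨hne, hmemad⟩ := Finset.mem_erase.mp hij
        have hsum : ij.1 + ij.2 = p - m := Finset.HasAntidiagonal.mem_antidiagonal.mp hmemad
        have hi1 : 1 ≤ ij.1 := by
          rcases Nat.eq_zero_or_pos ij.1 with h0' | h'
          · exfalso
            apply hne
            have : ij.2 = p - m := by omega
            calc ij = (ij.1, ij.2) := rfl
            _ = (0, p - m) := by rw [h0', this]
          · exact h'
        rw [hvmul]
        by_cases him : ij.1 ≤ m
        · have hAle : ((m - ij.1) • lam : WithTop ℚ) ≤ v (A.coeff ij.1) := by
            have h' := aux_v_coeff_le hv0 hvmul hvadd S0 (fun x hx => le_of_eq (hS0v x hx).symm)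
              (k := ij.1) (by omega)
            rwa [← hA, ← hm] at h'
          have hBlt : ((Multiset.card T - ij.2) • lam : WithTop ℚ) < v (B.coeff ij.2) := by
            have h' := aux_v_coeff_lt hv0 hvmul hvadd hlamtop T hTv (k := ij.2) (by omega)
            rwa [← hB] at h'
          have hTj : Multiset.card T - ij.2 = ij.1 := by omega
          rw [hTj] at hBlt
          calc (m • lam : WithTop ℚ) = ij.1 • lam + (m - ij.1) • lam := by
                rw [← add_nsmul]
                congr 1
                omega
          _ < v (B.coeff ij.2) + v (A.coeff ij.1) :=
                aux_add_lt_add hBlt hAle (aux_nsmul_ne_top hlamtop)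
          _ = v (A.coeff ij.1) + v (B.coeff ij.2) := add_comm _ _
        · have hA0 : A.coeff ij.1 = 0 := coeff_eq_zero_of_natDegree_lt (by omega)
          rw [hA0, (hv0 0).mpr rfl, top_add]
          exact (aux_nsmul_ne_top hlamtop).lt_top
      rw [aux_v_add_eq_left hv0 hvmul hvadd (by rw [hterm]; exact hrest), hterm]
    -- derivative side
    have hpne : (p : L) ≠ 0 := Nat.cast_ne_zero.mpr (by omega)
    set HD := derivative H with hHD
    have hHcp : H.coeff p = 1 := by
      rw [← hHdeg]
      exact hHm.coeff_natDegree
    have hcast : ((p - 1 : ℕ) : L) + 1 = (p : L) := by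
      push_cast [Nat.cast_sub (by omega : 1 ≤ p)]
      ring
    have hHDtop : HD.coeff (p - 1) = (p : L) := by
      rw [hHD, coeff_derivative, show p - 1 + 1 = p by omega, hHcp, one_mul, hcast]
    have hHDdeg : HD.natDegree = p - 1 := by
      refine le_antisymm ?_ (le_natDegree_of_ne_zero (by rw [hHDtop]; exact hpne))
      have h' := natDegree_derivative_le H
      rwa [hHdeg] at h'
    set Q := C (p : L)⁻¹ * HD with hQ
    have hQdeg : Q.natDegree = p - 1 := by
      rw [hQ, natDegree_C_mul (inv_ne_zero hpne), hHDdeg]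
    have hQmonic : Q.Monic := by
      have h' : Q.leadingCoeff = 1 := by
        rw [Polynomial.leadingCoeff, hQdeg, hQ, coeff_C_mul, hHDtop, inv_mul_cancel₀ hpne]
      exact h'
    have hQne : Q ≠ 0 := hQmonic.ne_zero
    have hHD2 : HD = C (p : L) * Q := by
      rw [hQ, ← mul_assoc, ← C_mul, mul_inv_cancel₀ hpne, C_1, one_mul]
    have hYcard : Multiset.card Q.roots = p - 1 := by
      rw [splits_iff_card_roots.mp (IsAlgClosed.splits Q), hQdeg]
    set Y := Q.roots with hY
    have hQprod : Q = (Y.map fun z => X - C z).prod :=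
      (IsAlgClosed.splits Q).eq_prod_roots_of_monic hQmonic
    have hYne : Y ≠ 0 := by
      intro h'
      rw [h'] at hYcard
      simp at hYcard
      omega
    obtain ⟨ym, hymY, hymin⟩ := aux_exists_min v Y hYne
    set mu := v ym with hmu
    have hid : H.coeff (p - m) * ((p - m : ℕ) : L) = (p : L) * Q.coeff (p - 1 - m) := by
      have h1 : HD.coeff (p - 1 - m) = H.coeff (p - 1 - m + 1) * ((p - 1 - m + 1 : ℕ) : L) := by
        rw [hHD, coeff_derivative]
        norm_cast
      rw [show p - 1 - m + 1 = p - m by omega] at h1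
      rw [← h1, hHD2, coeff_C_mul]
    have hvmL : v (H.coeff (p - m) * ((p - m : ℕ) : L)) = m • lam := by
      rw [hvmul, hHcoeff, aux_v_nat_coprime hv0 hvmul hvadd hp hvp (by omega) (by omega), add_zero]
    have hQc : (m • mu : WithTop ℚ) ≤ v (Q.coeff (p - 1 - m)) := by
      have h' := aux_v_coeff_le hv0 hvmul hvadd Y (fun x hx => hymin x hx)
        (k := p - 1 - m) (by omega)
      rw [← hQprod] at h'
      have hcards : Multiset.card Y - (p - 1 - m) = m := by omega
      rwa [hcards] at h'
    have hineq : (1 : WithTop ℚ) + m • mu ≤ m • lam := by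
      rw [← hvmL, hid, hvmul, hvp]
      exact add_le_add_right hQc 1
    have hmulam : mu < lam := by
      by_contra hcon2
      push_neg at hcon2
      have h2 : m • lam ≤ m • mu := aux_nsmul_mono hcon2 m
      have h3 : (1 : WithTop ℚ) + m • lam ≤ m • lam := le_trans (add_le_add_right h2 1) hineq
      exact absurd h3 (not_le.mpr (aux_lt_one_add (aux_nsmul_ne_top hlamtop)))
    have hymroot : HD.eval ym = 0 := by
      have hQr : Q.eval ym = 0 := (mem_roots hQne).mp hymY
      rw [hHD2, eval_mul, eval_C, hQr, mul_zero]
    have hbr : (0 : WithTop ℚ) ≤ v (H.eval ym) := hbranch ym hymroot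
    have hevalv : v (H.eval ym) = p • mu := by
      conv_lhs => rw [hZprod]
      rw [eval_multiset_prod, Multiset.map_map, aux_v_prod hv0 hvmul, Multiset.map_map]
      have hrep : Z.map (v ∘ (eval ym : L[X] → L) ∘ fun z => X - C z) = Multiset.replicate p mu := by
        rw [Multiset.eq_replicate]
        refine ⟨by rw [Multiset.card_map, hZcard], ?_⟩
        intro b hb
        obtain ⟨z, hz, rfl⟩ := Multiset.mem_map.mp hb
        simp only [Function.comp_apply, eval_sub, eval_X, eval_C]
        exact aux_v_sub_eq_left hv0 hvmul hvadd (lt_of_lt_of_le hmulam (hzmin z hz))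
      rw [hrep, Multiset.sum_replicate]
    have hmuneg : mu < 0 := lt_of_lt_of_le hmulam hlam0
    have hmutop : mu ≠ ⊤ := by
      intro ht
      rw [ht] at hmuneg
      exact absurd hmuneg (by simp)
    obtain ⟨q, hq⟩ := WithTop.ne_top_iff_exists.mp hmutop
    have hq0 : q < 0 := by
      rw [← hq] at hmuneg
      exact_mod_cast hmuneg
    have hfin : (0 : WithTop ℚ) ≤ p • mu := hevalv ▸ hbr
    rw [← hq, aux_nsmul_coe] at hfin
    have hfin2 : (0 : ℚ) ≤ p • q := by exact_mod_cast hfin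
    rw [nsmul_eq_mul] at hfin2
    have hppos : (0 : ℚ) < (p : ℚ) := by exact_mod_cast hp.pos
    nlinarith
  -- conclusions
  have key : ∀ i < p, (0 : WithTop ℚ) < v (algebraMap K L (h.coeff i)) := by
    intro i hi
    have hcoe : algebraMap K L (h.coeff i) = H.coeff i := (coeff_map f i).symm
    rw [hcoe]
    have h' := aux_v_coeff_lt hv0 hvmul hvadd (c := 0) (by simp) Z hroots_pos
      (k := i) (by omega)
    rw [← hZprod, smul_zero] at h'
    exact h'
  refine ⟨?_, key⟩
  intro i
  rcases lt_trichotomy i p with hi | rfl | hi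
  · exact (key i hi).le
  · rw [show h.coeff i = 1 from by rw [← hdeg]; exact hmonic.coeff_natDegree, map_one, hv1]
  · rw [coeff_eq_zero_of_natDegree_lt (by omega), map_zero, (hv0 0).mpr rfl]
    exact le_top
end

section
/- With R a complete DVR of unequal characteristics (0,p), let β(X) ∈ R[X] be monic of degree p with β(0)=0 and β ≡ X^p modulo the maximal ideal, and γ(X) = X^p β(1/X). Then the R-algebra R[X_∞][Y]/(Y^p − γ(Y)·X_∞) — i.e., the quotient of R[X_∞, Y] by (Y^p − γ(Y) X_∞) — is isomorphic to the localization R[Y, γ(Y)^{-1}], and it is a finite module over R[X_∞] via X_∞ ↦ Y^p/γ(Y). -/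
open Polynomial

set_option maxHeartbeats 2000000 in
set_option synthInstance.maxHeartbeats 1000000 in
theorem specialization_aux {R : Type*} [CommRing R] (p : ℕ) (hp : 0 < p)
    (γ : R[X]) (hγ0 : γ.coeff 0 = 1) (hγdeg : γ.natDegree < p)
    (q : Polynomial (Polynomial R))
    (hq : q = (X : Polynomial (Polynomial R)) ^ p -
      γ.map (C : R →+* Polynomial R) * C (X : Polynomial R)) :
    Module.Finite (Polynomial R)
        ((Polynomial (Polynomial R)) ⧸ Ideal.span {q}) ∧
      Nonempty (((Polynomial (Polynomial R)) ⧸ Ideal.span {q}) ≃ₐ[R]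
        Localization.Away γ) := by
  classical
  -- q is monic
  have hmq : q.Monic := by
    rw [hq]
    apply monic_X_pow_sub
    have hdm : degree (γ.map (C : R →+* Polynomial R)) < (p : WithBot ℕ) := by
      refine lt_of_le_of_lt (degree_map_le) ?_
      refine lt_of_le_of_lt (degree_le_natDegree) ?_
      exact_mod_cast hγdeg
    calc degree (γ.map (C : R →+* Polynomial R) * C (X : Polynomial R))
        ≤ degree (γ.map (C : R →+* Polynomial R)) + degree (C (X : Polynomial R)) :=
          degree_mul_le _ _
      _ ≤ degree (γ.map (C : R →+* Polynomial R)) + 0 := add_le_add le_rfl degree_C_le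
      _ = degree (γ.map (C : R →+* Polynomial R)) := add_zero _
      _ < (p : WithBot ℕ) := hdm
  have hfin : Module.Finite (Polynomial R)
      ((Polynomial (Polynomial R)) ⧸ Ideal.span {q}) :=
    Module.Finite.of_basis (AdjoinRoot.powerBasis' hmq).basis
  refine ⟨hfin, ?_⟩
  let φ : R[X] →+* Localization.Away γ := algebraMap R[X] (Localization.Away γ)
  have hφC : (algebraMap R (Localization.Away γ) : R →+* Localization.Away γ) = φ.comp (C : R →+* R[X]) := rfl
  let xinf : Localization.Away γ := φ X ^ p * IsLocalization.Away.invSelf γ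
  let g : Polynomial R →+* Localization.Away γ := eval₂RingHom (algebraMap R (Localization.Away γ)) xinf
  let ψ : Polynomial (Polynomial R) →+* Localization.Away γ := eval₂RingHom g (φ X)
  have hgC : g.comp (C : R →+* Polynomial R) = algebraMap R (Localization.Away γ) := by
    ext r
    simp [g]
  have hψC : ∀ s : Polynomial R, ψ (C s) = g s := by
    intro s; simp [ψ]
  have hψmap : ∀ s : R[X], ψ (s.map (C : R →+* Polynomial R)) = φ s := by
    intro s
    have h1 : ψ (s.map (C : R →+* Polynomial R)) = eval₂ (g.comp C) (φ X) s := by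
      simp [ψ, eval₂_map]
    rw [h1, hgC, hφC, ← hom_eval₂, eval₂_C_X]
  have hγinv : φ γ * IsLocalization.Away.invSelf γ = 1 :=
    IsLocalization.Away.mul_invSelf γ
  have hψq : ψ q = 0 := by
    rw [hq, map_sub, map_mul, map_pow]
    have h1 : ψ X = φ X := by simp [ψ]
    have h2 : ψ (C (X : R[X])) = xinf := by rw [hψC]; simp [g]
    rw [h1, h2, hψmap γ]
    show φ X ^ p - φ γ * (φ X ^ p * IsLocalization.Away.invSelf γ) = 0
    calc φ X ^ p - φ γ * (φ X ^ p * IsLocalization.Away.invSelf γ)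
        = φ X ^ p - (φ γ * IsLocalization.Away.invSelf γ) * φ X ^ p := by ring
      _ = 0 := by rw [hγinv]; ring
  have hker : ∀ a ∈ Ideal.span {q}, ψ a = 0 := by
    intro a ha
    rw [Ideal.mem_span_singleton] at ha
    obtain ⟨c, rfl⟩ := ha
    rw [map_mul, hψq, zero_mul]
  let Ψ : (Polynomial (Polynomial R) ⧸ Ideal.span {q}) →+* Localization.Away γ := Ideal.Quotient.lift _ ψ hker
  let mkq : Polynomial (Polynomial R) →+* (Polynomial (Polynomial R) ⧸ Ideal.span {q}) := Ideal.Quotient.mk (Ideal.span {q})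
  let ρ : R[X] →+* (Polynomial (Polynomial R) ⧸ Ideal.span {q}) := mkq.comp (mapRingHom (C : R →+* Polynomial R))
  have hρ : ∀ s : R[X], ρ s = mkq (s.map (C : R →+* Polynomial R)) := fun s => rfl
  have hρX : ρ X = mkq X := by rw [hρ, map_X]
  have hrel : (mkq X) ^ p = ρ γ * mkq (C (X : R[X])) := by
    have h0 : mkq ((X : Polynomial (Polynomial R)) ^ p
        - γ.map (C : R →+* Polynomial R) * C (X : R[X])) = 0 := by
      rw [← hq]
      exact Ideal.Quotient.eq_zero_iff_mem.mpr (Ideal.subset_span rfl)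
    have h1 : mkq ((X : Polynomial (Polynomial R)) ^ p)
        - mkq (γ.map (C : R →+* Polynomial R) * C (X : R[X])) = 0 := by
      rw [← map_sub mkq]; exact h0
    have h2 : mkq ((X : Polynomial (Polynomial R)) ^ p)
        = mkq (γ.map (C : R →+* Polynomial R)) * mkq (C (X : R[X])) := by
      rw [sub_eq_zero.mp h1, map_mul mkq]
    calc (mkq X) ^ p = mkq ((X : Polynomial (Polynomial R)) ^ p) := (map_pow mkq X p).symm
      _ = mkq (γ.map (C : R →+* Polynomial R)) * mkq (C (X : R[X])) := h2
      _ = ρ γ * mkq (C (X : R[X])) := (congrArg (fun z => z * mkq (C (X : R[X]))) (hρ γ).symm)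
  have hdivX : (X : R[X]) * γ.divX + 1 = γ := by
    have h := X_mul_divX_add γ
    rwa [hγ0, map_one] at h
  have hyd : mkq X * ρ γ.divX + 1 = ρ γ := by
    have h := congrArg ρ hdivX
    rw [map_add, map_mul, map_one, hρX] at h
    exact h
  obtain ⟨m, hm⟩ := sub_dvd_pow_sub_pow (ρ γ - 1) (-1) p
  rw [show (ρ γ - 1) - (-1) = ρ γ by ring] at hm
  have h4 : ρ γ - 1 = mkq X * ρ γ.divX := by rw [← hyd]; ring
  have h5 : (ρ γ - 1) ^ p = ρ γ * (mkq (C (X : R[X])) * ρ γ.divX ^ p) := by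
    rw [h4]
    calc (mkq X * ρ γ.divX) ^ p = mkq X ^ p * ρ γ.divX ^ p := mul_pow (mkq X) (ρ γ.divX) p
      _ = ρ γ * (mkq (C (X : R[X])) * ρ γ.divX ^ p) := by rw [hrel]; ring
  have hkey : ρ γ * (mkq (C (X : R[X])) * ρ γ.divX ^ p - m) = (-1) ^ p := by
    linear_combination hm - h5
  have hunit : IsUnit (ρ γ) := by
    haveI : IsDedekindFiniteMonoid (Polynomial (Polynomial R) ⧸ Ideal.span {q}) :=
      ⟨fun {a b} h => (mul_comm b a).trans h⟩
    have hu : IsUnit (ρ γ * (mkq (C (X : R[X])) * ρ γ.divX ^ p - m)) := by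
      rw [hkey]
      exact IsUnit.pow p (isUnit_iff_exists_inv.mpr
        ⟨(-1 : Polynomial (Polynomial R) ⧸ Ideal.span {q}), by ring⟩)
    exact isUnit_of_mul_isUnit_left (M := Polynomial (Polynomial R) ⧸ Ideal.span {q}) hu
  let Χ : Localization.Away γ →+* (Polynomial (Polynomial R) ⧸ Ideal.span {q}) := IsLocalization.Away.lift (R := R[X]) (S := Localization.Away γ)
    (P := Polynomial (Polynomial R) ⧸ Ideal.span {q}) (g := ρ) γ hunit
  have hΧφ : ∀ s : R[X], Χ (φ s) = ρ s := fun s => IsLocalization.Away.lift_eq γ hunit s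
  have hΧinv : ρ γ * Χ (IsLocalization.Away.invSelf γ) = 1 := by
    have h := congrArg Χ hγinv
    rw [map_mul, map_one, hΧφ] at h
    exact h
  have hΧxinf : Χ xinf = mkq (C (X : R[X])) := by
    show Χ (φ X ^ p * IsLocalization.Away.invSelf γ) = _
    rw [map_mul, map_pow, hΧφ, hρX, hrel]
    linear_combination (mkq (C (X : R[X]))) * hΧinv
  have hΨmk : ∀ z : Polynomial (Polynomial R), Ψ (mkq z) = ψ z := fun z => rfl
  have hΧΨ : Χ.comp Ψ = RingHom.id (Polynomial (Polynomial R) ⧸ Ideal.span {q}) := by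
    apply Ideal.Quotient.ringHom_ext
    apply Polynomial.ringHom_ext'
    · apply Polynomial.ringHom_ext'
      · ext r
        show Χ (Ψ (mkq (C (C r)))) = mkq (C (C r))
        rw [hΨmk, hψC]
        have hgCr : g (C r) = φ (C r) := by
          rw [← RingHom.comp_apply, hgC, hφC]; rfl
        rw [hgCr, hΧφ, hρ, Polynomial.map_C]
      · show Χ (Ψ (mkq (C X))) = mkq (C X)
        rw [hΨmk, hψC]
        have : g (X : Polynomial R) = xinf := by simp [g]
        rw [this, hΧxinf]
    · show Χ (Ψ (mkq X)) = mkq X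
      rw [hΨmk]
      have : ψ (X : Polynomial (Polynomial R)) = φ X := by simp [ψ]
      rw [this, hΧφ, hρX]
  have hΨΧ : Ψ.comp Χ = RingHom.id (Localization.Away γ) := by
    apply IsLocalization.ringHom_ext (Submonoid.powers γ)
    refine RingHom.ext fun s => ?_
    show Ψ (Χ (φ s)) = φ s
    rw [hΧφ, hρ, hΨmk, hψmap]
  let e : (Polynomial (Polynomial R) ⧸ Ideal.span {q}) ≃+* Localization.Away γ := RingEquiv.ofRingHom Ψ Χ hΨΧ hΧΨ
  refine ⟨AlgEquiv.ofRingEquiv (f := e) ?_⟩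
  intro r
  have he : ∀ x, e x = Ψ x := fun x => rfl
  rw [he]
  change Ψ (mkq (C (C r))) = _
  rw [hΨmk, hψC]
  rw [← RingHom.comp_apply, hgC]

/-- With `R` a complete DVR of unequal characteristics `(0, p)`, let `β ∈ R[X]` be monic
of degree `p` with `β 0 = 0` and `β ≡ X ^ p` modulo the maximal ideal, and
`γ X = X ^ p * β (1 / X)` (the reverse of `β`).  Then the `R`-algebra
`R[X∞][Y] / (Y ^ p - γ Y * X∞)` is isomorphic to the localization `R[Y][γ(Y)⁻¹]`,
and it is a finite module over `R[X∞]` (via `X∞ ↦ Y ^ p / γ Y`). -/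
theorem specialization_stmt3
    (p : ℕ) (hp : p.Prime)
    (R : Type*) [CommRing R] [IsDomain R] [IsDiscreteValuationRing R] [CharZero R]
    [IsAdicComplete (IsLocalRing.maximalIdeal R) R]
    (hpR : (p : R) ∈ IsLocalRing.maximalIdeal R)
    (β : R[X]) (hmonic : β.Monic) (hdeg : β.natDegree = p) (hβ0 : β.coeff 0 = 0)
    (hred : ∀ i < p, β.coeff i ∈ IsLocalRing.maximalIdeal R)
    (γ : R[X]) (hγ : γ = β.reverse)
    (q : Polynomial (Polynomial R))
    (hq : q = (X : Polynomial (Polynomial R)) ^ p -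
      γ.map (C : R →+* Polynomial R) * C (X : Polynomial R)) :
    Module.Finite (Polynomial R)
        ((Polynomial (Polynomial R)) ⧸ Ideal.span {q}) ∧
      Nonempty (((Polynomial (Polynomial R)) ⧸ Ideal.span {q}) ≃ₐ[R]
        Localization.Away γ) := by
  have hγ0 : γ.coeff 0 = 1 := by
    rw [hγ, coeff_zero_reverse]
    exact hmonic
  have hβne : β ≠ 0 := hmonic.ne_zero
  have hntd : 0 < β.natTrailingDegree := by
    rcases Nat.eq_zero_or_pos β.natTrailingDegree with h | h
    · exfalso
      have := trailingCoeff_nonzero_iff_nonzero.mpr hβne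
      rw [trailingCoeff, h, hβ0] at this
      exact this rfl
    · exact h
  have hγdeg : γ.natDegree < p := by
    rw [hγ, reverse_natDegree, hdeg]
    exact Nat.sub_lt hp.pos hntd
  exact specialization_aux p hp.pos γ hγ0 hγdeg q hq
end
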